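/- Let Y be a compact metric space and P : C⁰(Y) → C⁰(Y) a positive bounded linear operator with a spectral gap at the simple dominant eigenvalue λ > 0, with continuous eigenfunction g ≥ 0 (Pg = λg) and eigenmeasure μ (P*μ = λμ, μ(g) = 1). Then for every bounded measurable h : Y → ℝ and every x with g(x) ≠ 0, the limit lim_{n→∞} [ (1/n) Σ_{i=0}^{n-1} Pⁱ(h · P^{n-i} 1)(x) ] / [ Pⁿ 1(x) ] equals ∫ h g dμ, where 1 denotes the constant function 1. -/

import Mathlib

open Filter Topology MeasureTheory

/-- Quasi-ergodic limit of conditioned Birkhoff averages.  `P` is a positive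
operator on functions over a compact metric space `Y`, with a spectral gap at the simple
dominant eigenvalue `lam > 0`, continuous eigenfunction `g ≥ 0` and eigenmeasure `μ`
(`P*μ = lam μ`, `μ(g) = 1`); the spectral gap is encoded, as in the paper, by exponentially
fast uniform convergence `(1/lamⁿ)Pⁿ f → μ(f)g` and mean ergodicity of `P/lam` on bounded
measurable functions.  Then for every bounded measurable `h` and every `x` with `g x ≠ 0`,
`(1/n) Σ_{i<n} Pⁱ(h · P^{n−i}1)(x) / Pⁿ1(x) → ∫ h g dμ`. -/
theorem stmt2 {Y : Type*} [MetricSpace Y] [CompactSpace Y] [MeasurableSpace Y] [BorelSpace Y]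
    (P : (Y → ℝ) →ₗ[ℝ] (Y → ℝ))
    (hP_bm : ∀ h : Y → ℝ, Measurable h → (∃ C, ∀ x, |h x| ≤ C) →
      Measurable (P h) ∧ ∃ C, ∀ x, |P h x| ≤ C)
    (hpos : ∀ h : Y → ℝ, (∀ x, 0 ≤ h x) → ∀ x, 0 ≤ P h x)
    (lam : ℝ) (hlam : 0 < lam)
    (g : Y → ℝ) (hgc : Continuous g) (hgpos : ∀ x, 0 ≤ g x) (hgeig : P g = lam • g)
    (μ : Measure Y) [IsFiniteMeasure μ]
    (hμeig : ∀ f : Y → ℝ, Continuous f → ∫ x, P f x ∂μ = lam * ∫ x, f x ∂μ)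
    (hμg : ∫ x, g x ∂μ = 1)
    (hconv : ∀ f : Y → ℝ, Measurable f → (∃ C, ∀ x, |f x| ≤ C) →
      ∃ C > (0:ℝ), ∃ ρ : ℝ, 0 ≤ ρ ∧ ρ < 1 ∧ ∀ n : ℕ, ∀ x : Y,
        |(lam ^ n)⁻¹ * (P ^ n) f x - (∫ y, f y ∂μ) * g x| ≤ C * ρ ^ n)
    (hmean : ∀ f : Y → ℝ, Measurable f → (∃ C, ∀ x, |f x| ≤ C) → ∀ x : Y,
      Tendsto (fun n : ℕ => (n : ℝ)⁻¹ * ∑ i ∈ Finset.range n, (lam ^ i)⁻¹ * (P ^ i) f x)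
        atTop (𝓝 ((∫ y, f y ∂μ) * g x)))
    (h : Y → ℝ) (hh : Measurable h) (hhb : ∃ C, ∀ x, |h x| ≤ C)
    (x : Y) (hx : g x ≠ 0) :
    Tendsto (fun n : ℕ =>
        ((n : ℝ)⁻¹ * ∑ i ∈ Finset.range n,
            (P ^ i) (fun y => h y * (P ^ (n - i)) (fun _ => (1:ℝ)) y) x)
          / ((P ^ n) (fun _ => (1:ℝ)) x))
      atTop (𝓝 (∫ y, h y * g y ∂μ)) := by
  classical
  have : Nonempty Y := ⟨x⟩
  obtain ⟨H, hH⟩ := hhb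
  have hH0 : 0 ≤ H := le_trans (abs_nonneg _) (hH x)
  have hpow_succ : ∀ (n : ℕ) (f : Y → ℝ), (P ^ (n+1)) f = (P ^ n) (P f) := fun n f => by
    rw [pow_succ]; rfl
  have ppos : ∀ (i : ℕ) (f : Y → ℝ), (∀ y, 0 ≤ f y) → ∀ y, 0 ≤ (P ^ i) f y := by
    intro i
    induction i with
    | zero => intro f hf y; simpa using hf y
    | succ n ih => intro f hf y; rw [hpow_succ]; exact ih _ (hpos f hf) y
  have pabs : ∀ (i : ℕ) (f : Y → ℝ) (c : ℝ), (∀ y, |f y| ≤ c) →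
      ∀ y, |(P ^ i) f y| ≤ c * (P ^ i) (fun _ => (1:ℝ)) y := by
    intro i f c hf y
    have hfun1 : (fun z : Y => c - f z) = c • (fun _ : Y => (1:ℝ)) - f := by
      funext z
      simp [smul_eq_mul]
    have hfun2 : (fun z : Y => c + f z) = c • (fun _ : Y => (1:ℝ)) + f := by
      funext z
      simp [smul_eq_mul]
    have e1 := ppos i _ (fun z => by linarith [(abs_le.1 (hf z)).2] : ∀ z : Y, 0 ≤ c - f z) y
    have e2 := ppos i _ (fun z => by linarith [(abs_le.1 (hf z)).1] : ∀ z : Y, 0 ≤ c + f z) y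
    rw [hfun1, map_sub, _root_.map_smul] at e1
    rw [hfun2, map_add, _root_.map_smul] at e2
    simp only [Pi.sub_apply, Pi.add_apply, Pi.smul_apply, smul_eq_mul] at e1 e2
    rw [abs_le]
    constructor <;> linarith
  obtain ⟨C1, hC1pos, ρ, hρ0, hρ1, hest⟩ :=
    hconv (fun _ => (1:ℝ)) measurable_const ⟨1, fun _ => by norm_num⟩
  set m := ∫ y, (1:ℝ) ∂μ with hm_def
  have hmpos : 0 < m := by
    have hμu : μ Set.univ ≠ 0 := by
      intro h0
      have h1 : μ = 0 := Measure.measure_univ_eq_zero.mp h0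
      rw [h1] at hμg
      simp at hμg
    have hme : m = (μ Set.univ).toReal := by simp [hm_def]; rfl
    rw [hme]
    exact ENNReal.toReal_pos hμu (measure_ne_top μ _)
  have hgx : 0 < g x := lt_of_le_of_ne (hgpos x) (Ne.symm hx)
  set L := ∫ y, h y * g y ∂μ with hL_def
  set K := m * g x + C1 with hK_def
  have hKpos : 0 < K := add_pos (mul_pos hmpos hgx) hC1pos
  obtain ⟨G, hG⟩ : ∃ G, ∀ y, |g y| ≤ G := by
    obtain ⟨z, -, hz⟩ := isCompact_univ.exists_isMaxOn Set.univ_nonempty hgc.abs.continuousOn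
    exact ⟨|g z|, fun y => hz (Set.mem_univ y)⟩
  have hT := hmean (fun y => h y * g y) (hh.mul hgc.measurable)
      ⟨H * G, fun y => by
        rw [abs_mul]
        exact mul_le_mul (hH y) (hG y) (abs_nonneg _) hH0⟩ x
  have hgeom : ∀ n : ℕ, ∑ i ∈ Finset.range n, ρ ^ (n - i) ≤ (1 - ρ)⁻¹ := by
    intro n
    calc ∑ i ∈ Finset.range n, ρ ^ (n - i)
        ≤ ∑ i ∈ Finset.range n, ρ ^ (n - 1 - i) := by
          refine Finset.sum_le_sum fun i hi => ?_
          exact pow_le_pow_of_le_one hρ0 hρ1.le (Nat.sub_le_sub_right (Nat.sub_le n 1) i)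
      _ = ∑ i ∈ Finset.range n, ρ ^ i := Finset.sum_range_reflect (fun j => ρ ^ j) n
      _ ≤ ∑' i : ℕ, ρ ^ i := Summable.sum_le_tsum (Finset.range n)
            (fun i _ => pow_nonneg hρ0 i) (summable_geometric_of_lt_one hρ0 hρ1)
      _ = (1 - ρ)⁻¹ := tsum_geometric_of_lt_one hρ0 hρ1
  have key : ∀ n i : ℕ, i < n →
      |(lam ^ n)⁻¹ * (P ^ i) (fun y => h y * (P ^ (n - i)) (fun _ => (1:ℝ)) y) x
        - m * ((lam ^ i)⁻¹ * (P ^ i) (fun y => h y * g y) x)| ≤ H * C1 * K * ρ ^ (n - i) := by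
    intro n i hin
    have hik : i + (n - i) = n := Nat.add_sub_cancel' hin.le
    set k := n - i with hk_def
    have hlk : (0:ℝ) < lam ^ k := pow_pos hlam k
    have hli : (0:ℝ) < lam ^ i := pow_pos hlam i
    have hln : (0:ℝ) < lam ^ n := pow_pos hlam n
    have hlmul : lam ^ n = lam ^ i * lam ^ k := by rw [← pow_add, hik]
    have hEb : ∀ y, |h y * ((P ^ k) (fun _ => (1:ℝ)) y - lam ^ k * m * g y)|
        ≤ H * (C1 * ρ ^ k) * lam ^ k := by
      intro y
      have h1 := hest k y
      have h2 : (P ^ k) (fun _ => (1:ℝ)) y - lam ^ k * m * g y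
          = lam ^ k * ((lam ^ k)⁻¹ * (P ^ k) (fun _ => (1:ℝ)) y - m * g y) := by
        field_simp
      rw [abs_mul, h2, abs_mul, abs_of_pos hlk]
      calc |h y| * (lam ^ k * |(lam ^ k)⁻¹ * (P ^ k) (fun _ => (1:ℝ)) y - m * g y|)
          ≤ H * (lam ^ k * (C1 * ρ ^ k)) := by
            refine mul_le_mul (hH y) ?_ (by positivity) hH0
            exact mul_le_mul_of_nonneg_left h1 hlk.le
        _ = H * (C1 * ρ ^ k) * lam ^ k := by ring
    have hsplit : (fun y => h y * (P ^ k) (fun _ => (1:ℝ)) y)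
        = (lam ^ k * m) • (fun y => h y * g y)
          + (fun y => h y * ((P ^ k) (fun _ => (1:ℝ)) y - lam ^ k * m * g y)) := by
      funext y
      simp only [Pi.add_apply, Pi.smul_apply, smul_eq_mul]
      ring
    have habs := pabs i _ _ hEb x
    have hPi1 : (lam ^ i)⁻¹ * (P ^ i) (fun _ => (1:ℝ)) x ≤ K := by
      have h1 := (abs_le.1 (hest i x)).2
      have h3 : ρ ^ i ≤ 1 := pow_le_one₀ hρ0 hρ1.le
      have h4 : C1 * ρ ^ i ≤ C1 := by nlinarith
      simp only [hK_def]
      linarith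
    have hPi1nn : (0:ℝ) ≤ (P ^ i) (fun _ => (1:ℝ)) x := ppos i _ (fun _ => zero_le_one) x
    rw [hsplit, map_add, _root_.map_smul]
    simp only [Pi.add_apply, Pi.smul_apply, smul_eq_mul]
    set A := (P ^ i) (fun y => h y * g y) x with hA_def
    set B := (P ^ i) (fun y => h y * ((P ^ k) (fun _ => (1:ℝ)) y - lam ^ k * m * g y)) x
      with hB_def
    have hc : (lam ^ n)⁻¹ * (lam ^ k * m * A + B) - m * ((lam ^ i)⁻¹ * A)
        = (lam ^ n)⁻¹ * B := by
      rw [hlmul]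
      field_simp
      ring
    rw [hc, abs_mul, abs_of_pos (inv_pos.2 hln)]
    calc (lam ^ n)⁻¹ * |B|
        ≤ (lam ^ n)⁻¹ * (H * (C1 * ρ ^ k) * lam ^ k * (P ^ i) (fun _ => (1:ℝ)) x) :=
          mul_le_mul_of_nonneg_left habs (inv_pos.2 hln).le
      _ = (H * C1 * ρ ^ k) * ((lam ^ i)⁻¹ * (P ^ i) (fun _ => (1:ℝ)) x) := by
          rw [hlmul]
          field_simp
      _ ≤ (H * C1 * ρ ^ k) * K := by
          refine mul_le_mul_of_nonneg_left hPi1 ?_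
          exact mul_nonneg (mul_nonneg hH0 hC1pos.le) (pow_nonneg hρ0 k)
      _ = H * C1 * K * ρ ^ k := by ring
  set num : ℕ → ℝ := fun n => ∑ i ∈ Finset.range n,
      (P ^ i) (fun y => h y * (P ^ (n - i)) (fun _ => (1:ℝ)) y) x with hnum_def
  set bs : ℕ → ℝ := fun n => ∑ i ∈ Finset.range n,
      (lam ^ i)⁻¹ * (P ^ i) (fun y => h y * g y) x with hbs_def
  have hsumest : ∀ n : ℕ, |(lam ^ n)⁻¹ * num n - m * bs n| ≤ H * C1 * K * (1 - ρ)⁻¹ := by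
    intro n
    have heq : (lam ^ n)⁻¹ * num n - m * bs n
        = ∑ i ∈ Finset.range n,
            ((lam ^ n)⁻¹ * (P ^ i) (fun y => h y * (P ^ (n - i)) (fun _ => (1:ℝ)) y) x
              - m * ((lam ^ i)⁻¹ * (P ^ i) (fun y => h y * g y) x)) := by
      simp only [hnum_def, hbs_def, Finset.mul_sum, Finset.sum_sub_distrib]
    rw [heq]
    have hnn : (0:ℝ) ≤ H * C1 * K := mul_nonneg (mul_nonneg hH0 hC1pos.le) hKpos.le
    calc |∑ i ∈ Finset.range n,
            ((lam ^ n)⁻¹ * (P ^ i) (fun y => h y * (P ^ (n - i)) (fun _ => (1:ℝ)) y) x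
              - m * ((lam ^ i)⁻¹ * (P ^ i) (fun y => h y * g y) x))|
        ≤ ∑ i ∈ Finset.range n,
            |(lam ^ n)⁻¹ * (P ^ i) (fun y => h y * (P ^ (n - i)) (fun _ => (1:ℝ)) y) x
              - m * ((lam ^ i)⁻¹ * (P ^ i) (fun y => h y * g y) x)| :=
          Finset.abs_sum_le_sum_abs _ _
      _ ≤ ∑ i ∈ Finset.range n, H * C1 * K * ρ ^ (n - i) :=
          Finset.sum_le_sum fun i hi => key n i (Finset.mem_range.1 hi)
      _ = H * C1 * K * ∑ i ∈ Finset.range n, ρ ^ (n - i) := by rw [Finset.mul_sum]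
      _ ≤ H * C1 * K * (1 - ρ)⁻¹ := mul_le_mul_of_nonneg_left (hgeom n) hnn
  set S : ℕ → ℝ := fun n => (lam ^ n)⁻¹ * ((n : ℝ)⁻¹ * num n) with hS_def
  set T : ℕ → ℝ := fun n => (n : ℝ)⁻¹ * bs n with hT_def
  have hdiffb : ∀ n : ℕ, |S n - m * T n| ≤ (n : ℝ)⁻¹ * (H * C1 * K * (1 - ρ)⁻¹) := by
    intro n
    have h1 : S n - m * T n = (n : ℝ)⁻¹ * ((lam ^ n)⁻¹ * num n - m * bs n) := by
      simp only [hS_def, hT_def]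
      ring
    rw [h1, abs_mul, abs_of_nonneg (by positivity : (0:ℝ) ≤ ((n:ℝ))⁻¹)]
    exact mul_le_mul_of_nonneg_left (hsumest n) (by positivity)
  have hcn : Tendsto (fun n : ℕ => (n : ℝ)⁻¹ * (H * C1 * K * (1 - ρ)⁻¹)) atTop (𝓝 0) := by
    simpa using (tendsto_inv_atTop_nhds_zero_nat (𝕜 := ℝ)).mul_const (H * C1 * K * (1 - ρ)⁻¹)
  have hdiff : Tendsto (fun n : ℕ => S n - m * T n) atTop (𝓝 0) := by
    refine tendsto_of_tendsto_of_tendsto_of_le_of_le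
        (g := fun n : ℕ => -((n : ℝ)⁻¹ * (H * C1 * K * (1 - ρ)⁻¹)))
        (h := fun n : ℕ => (n : ℝ)⁻¹ * (H * C1 * K * (1 - ρ)⁻¹)) ?_ ?_ ?_ ?_
    · simpa using hcn.neg
    · simpa using hcn
    · intro n; linarith [(abs_le.1 (hdiffb n)).1]
    · intro n; linarith [(abs_le.1 (hdiffb n)).2]
  have hSt : Tendsto S atTop (𝓝 (m * (L * g x))) := by
    have h1 : Tendsto (fun n : ℕ => m * T n) atTop (𝓝 (m * (L * g x))) := hT.const_mul m
    have h2 := hdiff.add h1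
    simp only [zero_add] at h2
    refine h2.congr fun n => by ring
  have hD : Tendsto (fun n : ℕ => (lam ^ n)⁻¹ * (P ^ n) (fun _ => (1:ℝ)) x) atTop
      (𝓝 (m * g x)) := by
    rw [tendsto_iff_norm_sub_tendsto_zero]
    have h0 : Tendsto (fun n : ℕ => C1 * ρ ^ n) atTop (𝓝 0) := by
      simpa using (tendsto_pow_atTop_nhds_zero_of_lt_one hρ0 hρ1).const_mul C1
    refine squeeze_zero (fun n => norm_nonneg _) (fun n => ?_) h0
    simpa [Real.norm_eq_abs] using hest n x
  have hne : m * g x ≠ 0 := (mul_pos hmpos hgx).ne'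
  have hfinal := hSt.div hD hne
  have hq : m * (L * g x) / (m * g x) = L := by
    field_simp
  rw [hq] at hfinal
  refine hfinal.congr fun n => ?_
  have hln : (lam ^ n)⁻¹ ≠ 0 := inv_ne_zero (pow_pos hlam n).ne'
  simp only [hS_def, hnum_def]
  exact mul_div_mul_left _ _ hln
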